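/- A natural number p > 1 is prime if and only if for every natural number n with n > p + 1, p divides the difference binomial(n, p) − ⌊n/p⌋. -/

import Mathlib

open Finset

theorem prime_iff_dvd_choose_sub_floor (p : ℕ) (hp : 1 < p) :
    p.Prime ↔ ∀ n : ℕ, n > p + 1 →
      (p : ℤ) ∣ ((n.choose p : ℤ) - ((n / p : ℕ) : ℤ)) := by
  constructor
  · intro hpp n _
    haveI : Fact p.Prime := ⟨hpp⟩
    have h := Choose.choose_modEq_choose_mod_mul_choose_div (n := n) (k := p) (p := p)
    rw [Nat.mod_self, Nat.div_self hpp.pos, Nat.choose_zero_right, Nat.choose_one_right] at h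
    have h2 : (n.choose p : ℤ) ≡ ((n / p : ℕ) : ℤ) [ZMOD p] := by
      simpa using h
    exact (Int.ModEq.dvd h2.symm)
  · intro H
    by_contra hnp
    set q := p.minFac with hq_def
    have hq : q.Prime := Nat.minFac_prime (by omega)
    haveI : Fact q.Prime := ⟨hq⟩
    have hqd : q ∣ p := Nat.minFac_dvd p
    have hq2 : 2 ≤ q := hq.two_le
    have hqlt : q < p := by
      rcases lt_or_eq_of_le (Nat.le_of_dvd (by omega) hqd) with h | h
      · exact h
      · exact absurd (h ▸ hq) hnp
    set v := padicValNat q p with hv_def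
    have hp0 : p ≠ 0 := by omega
    have hv1 : 1 ≤ v := by
      rw [hv_def, ← Nat.pow_one q] at *
      exact one_le_padicValNat_of_dvd (by omega) hqd
    have hqvp : q ^ v ∣ p := pow_padicValNat_dvd
    -- q ∤ (p-1).choose (q-1)
    have hC' : ¬ q ∣ (p - 1).choose (q - 1) := by
      have hmod : (p - 1) % q = q - 1 := by
        obtain ⟨t, ht⟩ := hqd
        have ht0 : t ≠ 0 := by rintro rfl; simp at ht; omega
        obtain ⟨t', rfl⟩ := Nat.exists_eq_succ_of_ne_zero ht0
        rw [Nat.mul_succ] at ht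
        have he : p - 1 = (q - 1) + q * t' := by omega
        rw [he, Nat.add_mul_mod_self_left, Nat.mod_eq_of_lt (by omega)]
      have hdiv : (q - 1) / q = 0 := Nat.div_eq_of_lt (by omega)
      have hmod2 : (q - 1) % q = q - 1 := Nat.mod_eq_of_lt (by omega)
      have h := Choose.choose_modEq_choose_mod_mul_choose_div
        (n := p - 1) (k := q - 1) (p := q)
      rw [hmod2, hdiv, hmod, Nat.choose_self, Nat.choose_zero_right] at h
      have h1 : ((p - 1).choose (q - 1) : ℤ) ≡ 1 [ZMOD q] := by simpa using h
      intro hdvd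
      have hd : (q : ℤ) ∣ ((p - 1).choose (q - 1) : ℤ) := Int.natCast_dvd_natCast.mpr hdvd
      have h3 : (q : ℤ) ∣ 1 - ((p - 1).choose (q - 1) : ℤ) := h1.dvd
      have h4 : (q : ℤ) ∣ 1 := by have h5 := h3.add hd; simpa using h5
      have := Int.le_of_dvd one_pos h4
      omega
    -- q^v ∤ p.choose q
    have hA : ¬ q ^ v ∣ p.choose q := by
      intro hdvd
      have hid : p * (p - 1).choose (q - 1) = p.choose q * q := by
        have h5 := Nat.add_one_mul_choose_eq (p - 1) (q - 1)
        simpa [Nat.succ_eq_add_one, Nat.sub_add_cancel (show 1 ≤ p by omega),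
          Nat.sub_add_cancel (show 1 ≤ q by omega)] using h5
      have hdvd2 : q ^ (v + 1) ∣ p * (p - 1).choose (q - 1) := by
        rw [hid, pow_succ]
        exact mul_dvd_mul hdvd dvd_rfl
      have hcop : Nat.Coprime (q ^ (v + 1)) ((p - 1).choose (q - 1)) :=
        Nat.Coprime.pow_left _ ((Nat.Prime.coprime_iff_not_dvd hq).mpr hC')
      have : q ^ (v + 1) ∣ p := hcop.dvd_of_dvd_mul_right hdvd2
      exact pow_succ_padicValNat_not_dvd hp0 this
    -- p ∣ p.choose k for 1 ≤ k < q
    have hmid : ∀ k, 1 ≤ k → k < q → p ∣ p.choose k := by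
      intro k hk1 hkq
      have hid : p * (p - 1).choose (k - 1) = p.choose k * k := by
        have h5 := Nat.add_one_mul_choose_eq (p - 1) (k - 1)
        simpa [Nat.succ_eq_add_one, Nat.sub_add_cancel (show 1 ≤ p by omega),
          Nat.sub_add_cancel hk1] using h5
      have hcop : Nat.Coprime p k := by
        by_contra hc
        have hgpos : 0 < Nat.gcd p k := Nat.gcd_pos_of_pos_right p (by omega)
        have hg1 : Nat.gcd p k ≠ 1 := hc
        have hpr := Nat.minFac_prime hg1
        have hd1 : (Nat.gcd p k).minFac ∣ p :=
          (Nat.minFac_dvd _).trans (Nat.gcd_dvd_left _ _)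
        have hle : q ≤ (Nat.gcd p k).minFac := Nat.minFac_le_of_dvd hpr.two_le hd1
        have hle2 : (Nat.gcd p k).minFac ≤ k :=
          Nat.le_of_dvd (by omega) ((Nat.minFac_dvd _).trans (Nat.gcd_dvd_right _ _))
        omega
      have hdd : p ∣ p.choose k * k := hid ▸ dvd_mul_right p _
      exact hcop.dvd_of_dvd_mul_right hdd
    -- Vandermonde decomposition
    have hvand : (p + q).choose q =
        1 + (∑ k ∈ range (q - 1), p.choose (k + 1) * q.choose (q - (k + 1))) + p.choose q := by
      rw [Nat.add_choose_eq, Finset.Nat.sum_antidiagonal_eq_sum_range_succ_mk]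
      have hq1 : q = (q - 1) + 1 := by omega
      rw [Finset.sum_range_succ']
      simp only [Nat.choose_zero_right, one_mul, Nat.sub_zero, Nat.choose_self]
      rw [show q = (q - 1) + 1 from hq1, Finset.sum_range_succ]
      simp only [Nat.sub_add_cancel (show 1 ≤ q by omega)]
      simp only [Nat.sub_self, Nat.choose_zero_right, mul_one]
      omega
    -- divisibility of middle sum
    have hM : q ^ v ∣ (∑ k ∈ range (q - 1), p.choose (k + 1) * q.choose (q - (k + 1))) := by
      refine Finset.dvd_sum ?_
      intro k hk
      rw [Finset.mem_range] at hk
      have h1 : p ∣ p.choose (k + 1) := hmid (k + 1) (by omega) (by omega)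
      exact Dvd.dvd.mul_right (hqvp.trans h1) _
    -- conclude
    have hn := H (p + q) (by omega)
    have hfloor : (p + q) / p = 1 := by
      rw [Nat.add_comm, Nat.add_div_right _ (show 0 < p by omega), Nat.div_eq_of_lt hqlt]
    rw [hfloor, Nat.choose_symm_add, hvand] at hn
    push_cast at hn
    have hqvZ : ((q : ℤ)) ^ v ∣ (p : ℤ) := by exact_mod_cast Int.natCast_dvd_natCast.mpr hqvp
    have h6 : ((q : ℤ)) ^ v ∣ ((∑ k ∈ range (q - 1), p.choose (k + 1) * q.choose (q - (k + 1)) : ℕ) : ℤ)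
        + (p.choose q : ℤ) := by
      refine (hqvZ.trans ?_)
      convert hn using 1
      · rfl
      push_cast
      ring
    have hMZ : ((q : ℤ)) ^ v ∣ ((∑ k ∈ range (q - 1), p.choose (k + 1) * q.choose (q - (k + 1)) : ℕ) : ℤ) := by
      exact_mod_cast Int.natCast_dvd_natCast.mpr hM
    have h7 : ((q : ℤ)) ^ v ∣ (p.choose q : ℤ) := by
      have := h6.sub hMZ
      simpa using this
    exact hA (by exact_mod_cast h7)
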